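/- Let p be an odd prime, let χ be an odd multiplicative character modulo p, let n ≥ 1, let M ∈ M_n(ZMod p) be an arbitrary matrix, let R ∈ M_n(ZMod p) be symmetric, and let c ∈ ZMod p. Then Σ_{t ∈ (ZMod p)ⁿ} χ(det(M')) · e_p(-c · (ᵀt R t)) = 0, where M' denotes the matrix obtained from M by replacing its last column with the vector t. -/

import Mathlib

open Matrix

/-- The additive character `e_p(x) = exp(2πi x̃ / p)` on `ZMod p`. -/
noncomputable def eZMod (p : ℕ) (x : ZMod p) : ℂ :=
  Complex.exp (2 * Real.pi * Complex.I * (x.val : ℂ) / p)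

/-- For an odd prime `p`, an odd multiplicative character `χ` mod `p`, any matrix `M`,
a symmetric matrix `R` and a scalar `c`, the sum over the last column `t` of
`χ(det M') e_p(-c ᵀt R t)` vanishes, where `M'` is `M` with last column replaced by `t`. -/
theorem sum_det_updateColumn_oddChar_eq_zero (p : ℕ) [Fact p.Prime] (hp : Odd p)
    (χ : MulChar (ZMod p) ℂ) (hχ : χ (-1) = -1) (n : ℕ) (hn : 1 ≤ n)
    (M R : Matrix (Fin n) (Fin n) (ZMod p)) (hR : R.IsSymm) (c : ZMod p) :
    ∑ t : Fin n → ZMod p,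
      χ ((M.updateCol ⟨n - 1, by omega⟩ t).det) *
        eZMod p (-c * (t ⬝ᵥ R.mulVec t)) = 0 := by
  set j : Fin n := ⟨n - 1, by omega⟩
  set S := ∑ t : Fin n → ZMod p,
      χ ((M.updateCol j t).det) * eZMod p (-c * (t ⬝ᵥ R.mulVec t)) with hS
  have key : S = -S := by
    rw [hS, ← Finset.sum_neg_distrib]
    refine Fintype.sum_equiv (Equiv.neg _) _ _ fun t => ?_
    have h1 : (M.updateCol j (Equiv.neg _ t)).det = (-1 : ZMod p) * (M.updateCol j t).det := by
      have : (Equiv.neg (Fin n → ZMod p) t) = (-1 : ZMod p) • t := by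
        funext i; simp [Equiv.neg]
      rw [this, Matrix.det_updateCol_smul]
    have h2 : ((Equiv.neg (Fin n → ZMod p) t) ⬝ᵥ R.mulVec (Equiv.neg _ t)) = t ⬝ᵥ R.mulVec t := by
      simp [Equiv.neg, Matrix.mulVec_neg]
    rw [h1, h2, _root_.map_mul, hχ]
    ring
  have h2 : (2:ℂ) * S = 0 := by linear_combination key
  simpa using h2
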